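/- Let A be a non-unital associative algebra with non-degenerate product and let φ : A → M(A) be a non-degenerate algebra homomorphism into the multiplier algebra (i.e. φ(A)·A = A and A·φ(A) = A as linear spans). Then φ extends uniquely to a unital algebra homomorphism M(A) → M(A). -/

import Mathlib

/-- A multiplier of a non-unital ring: a pair of a left multiplier `L` and a right
multiplier `R` satisfying the compatibility conditions. -/
structure Mult (A : Type*) [NonUnitalRing A] where
  L : A → A
  R : A → A
  mid : ∀ a b : A, a * L b = R a * b
  lmul : ∀ a b : A, L (a * b) = L a * b
  rmul : ∀ a b : A, R (a * b) = a * R b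

namespace Mult

variable {A : Type*} [NonUnitalRing A]

theorem ext' {m n : Mult A} (h1 : m.L = n.L) (h2 : m.R = n.R) : m = n := by
  cases m; cases n; simp_all

instance : Zero (Mult A) :=
  ⟨⟨fun _ => 0, fun _ => 0, fun a b => by simp, fun a b => by simp, fun a b => by simp⟩⟩

instance : Add (Mult A) :=
  ⟨fun m n =>
    ⟨fun a => m.L a + n.L a, fun a => m.R a + n.R a,
      fun a b => by simp [mul_add, add_mul, m.mid, n.mid],
      fun a b => by simp [m.lmul, n.lmul, add_mul],
      fun a b => by simp [m.rmul, n.rmul, mul_add]⟩⟩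

instance : AddZeroClass (Mult A) where
  zero_add m := ext' (funext fun a => zero_add _) (funext fun a => zero_add _)
  add_zero m := ext' (funext fun a => add_zero _) (funext fun a => add_zero _)

instance : One (Mult A) := ⟨⟨id, id, fun _ _ => rfl, fun _ _ => rfl, fun _ _ => rfl⟩⟩

instance : Mul (Mult A) :=
  ⟨fun m n =>
    ⟨fun a => m.L (n.L a), fun a => n.R (m.R a),
      fun a b => by show a * m.L (n.L b) = n.R (m.R a) * b; rw [m.mid, n.mid],
      fun a b => by show m.L (n.L (a * b)) = m.L (n.L a) * b; rw [n.lmul, m.lmul],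
      fun a b => by show n.R (m.R (a * b)) = a * n.R (m.R b); rw [m.rmul, n.rmul]⟩⟩

/-- The canonical embedding `A → M(A)`. -/
def incl (a : A) : Mult A :=
  ⟨fun b => a * b, fun b => b * a,
    fun b c => by show b * (a * c) = b * a * c; rw [mul_assoc],
    fun b c => by show a * (b * c) = a * b * c; rw [mul_assoc],
    fun b c => by show b * c * a = b * (c * a); rw [mul_assoc]⟩

end Mult

/-- A non-degenerate homomorphism `φ : A → M(A)` of a non-degenerate non-unital algebra
extends uniquely to a unital homomorphism `M(A) → M(A)`. -/
theorem stmt18 {A : Type*} [NonUnitalRing A]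
    (hnd : (∀ x : A, (∀ a : A, x * a = 0) → x = 0) ∧
           (∀ x : A, (∀ a : A, a * x = 0) → x = 0))
    (φ : A →+ Mult A)
    (hφmul : ∀ a b : A, φ (a * b) = φ a * φ b)
    (hnd1 : AddSubgroup.closure {x : A | ∃ m a : A, x = (φ m).L a} = ⊤)
    (hnd2 : AddSubgroup.closure {x : A | ∃ m a : A, x = (φ m).R a} = ⊤) :
    ∃! ψ : Mult A →+ Mult A,
      (∀ m n : Mult A, ψ (m * n) = ψ m * ψ n) ∧ ψ 1 = 1 ∧
      ∀ a : A, ψ (Mult.incl a) = φ a := by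
  classical
  obtain ⟨hndl, hndr⟩ := hnd
  -- cancellation lemmas
  have cancel_l : ∀ x y : A, (∀ a : A, a * x = a * y) → x = y := fun x y h =>
    sub_eq_zero.mp (hndr _ fun a => by rw [mul_sub, h a, sub_self])
  have cancel_r : ∀ x y : A, (∀ a : A, x * a = y * a) → x = y := fun x y h =>
    sub_eq_zero.mp (hndl _ fun a => by rw [sub_mul, h a, sub_self])
  -- induction principles from the nondegeneracy of φ
  have indL : ∀ (p : A → Prop), p 0 → (∀ c d : A, p ((φ c).L d)) →
      (∀ x y : A, p x → p y → p (x + y)) → (∀ x : A, p x → p (-x)) → ∀ x : A, p x := by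
    intro p h0 hgen hadd hneg x
    have hx : x ∈ AddSubgroup.closure {x : A | ∃ m a : A, x = (φ m).L a} := by
      rw [hnd1]; trivial
    induction hx using AddSubgroup.closure_induction with
    | mem y hy => obtain ⟨c, d, rfl⟩ := hy; exact hgen c d
    | zero => exact h0
    | add a b _ _ ha hb => exact hadd a b ha hb
    | neg a _ ha => exact hneg a ha
  have indR : ∀ (p : A → Prop), p 0 → (∀ c d : A, p ((φ c).R d)) →
      (∀ x y : A, p x → p y → p (x + y)) → (∀ x : A, p x → p (-x)) → ∀ x : A, p x := by
    intro p h0 hgen hadd hneg x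
    have hx : x ∈ AddSubgroup.closure {x : A | ∃ m a : A, x = (φ m).R a} := by
      rw [hnd2]; trivial
    induction hx using AddSubgroup.closure_induction with
    | mem y hy => obtain ⟨c, d, rfl⟩ := hy; exact hgen c d
    | zero => exact h0
    | add a b _ _ ha hb => exact hadd a b ha hb
    | neg a _ ha => exact hneg a ha
  -- extensionality via generators
  have extL : ∀ x y : A, (∀ c d : A, (φ c).R d * x = (φ c).R d * y) → x = y := by
    intro x y h
    refine cancel_l x y ?_
    refine indR (fun a => a * x = a * y) (by simp) (fun c d => h c d)
      (fun a b ha hb => by show (a + b) * x = (a + b) * y; rw [add_mul, add_mul, ha, hb])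
      (fun a ha => by show -a * x = -a * y; rw [neg_mul, neg_mul, ha])
  have extR : ∀ x y : A, (∀ c d : A, x * (φ c).L d = y * (φ c).L d) → x = y := by
    intro x y h
    refine cancel_r x y ?_
    refine indL (fun a => x * a = y * a) (by simp) (fun c d => h c d)
      (fun a b ha hb => by show x * (a + b) = y * (a + b); rw [mul_add, mul_add, ha, hb])
      (fun a ha => by show x * -a = y * -a; rw [mul_neg, mul_neg, ha])
  -- additivity of L and R of any multiplier
  have L_add : ∀ (n : Mult A) (x y : A), n.L (x + y) = n.L x + n.L y := fun n x y =>
    cancel_l _ _ fun a => by rw [n.mid, mul_add, mul_add, n.mid, n.mid]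
  have L_zero : ∀ n : Mult A, n.L 0 = 0 := fun n =>
    cancel_l _ _ fun a => by rw [n.mid, mul_zero, mul_zero]
  have L_neg : ∀ (n : Mult A) (x : A), n.L (-x) = -n.L x := fun n x =>
    cancel_l _ _ fun a => by rw [n.mid, mul_neg, mul_neg, n.mid]
  have R_add : ∀ (n : Mult A) (x y : A), n.R (x + y) = n.R x + n.R y := fun n x y =>
    cancel_r _ _ fun a => by rw [← n.mid, add_mul, add_mul, ← n.mid, ← n.mid]
  have R_zero : ∀ n : Mult A, n.R 0 = 0 := fun n =>
    cancel_r _ _ fun a => by rw [← n.mid, zero_mul, zero_mul]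
  have R_neg : ∀ (n : Mult A) (x : A), n.R (-x) = -n.R x := fun n x =>
    cancel_r _ _ fun a => by rw [← n.mid, neg_mul, neg_mul, ← n.mid]
  -- key computations
  have key1 : ∀ (m : Mult A) (a b c d : A),
      (φ c).R d * ((φ (m.L a)).L b) = (φ (m.R c)).R d * ((φ a).L b) := by
    intro m a b c d
    calc (φ c).R d * ((φ (m.L a)).L b)
        = (φ (m.L a)).R ((φ c).R d) * b := (φ (m.L a)).mid _ _
      _ = ((φ c) * (φ (m.L a))).R d * b := rfl
      _ = (φ (c * m.L a)).R d * b := by rw [hφmul]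
      _ = (φ (m.R c * a)).R d * b := by rw [m.mid]
      _ = ((φ (m.R c)) * (φ a)).R d * b := by rw [hφmul]
      _ = (φ a).R ((φ (m.R c)).R d) * b := rfl
      _ = (φ (m.R c)).R d * ((φ a).L b) := ((φ a).mid _ _).symm
  have key2 : ∀ (m : Mult A) (a b c d : A),
      ((φ (m.R a)).R b) * ((φ c).L d) = ((φ a).R b) * ((φ (m.L c)).L d) := by
    intro m a b c d
    calc (φ (m.R a)).R b * ((φ c).L d)
        = (φ c).R ((φ (m.R a)).R b) * d := (φ c).mid _ _
      _ = ((φ (m.R a)) * (φ c)).R b * d := rfl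
      _ = (φ (m.R a * c)).R b * d := by rw [hφmul]
      _ = (φ (a * m.L c)).R b * d := by rw [← m.mid]
      _ = ((φ a) * (φ (m.L c))).R b * d := by rw [hφmul]
      _ = (φ (m.L c)).R ((φ a).R b) * d := rfl
      _ = ((φ a).R b) * ((φ (m.L c)).L d) := ((φ (m.L c)).mid _ _).symm
  -- existence of L and R values
  have exL : ∀ (m : Mult A) (x : A), ∃ y : A,
      ∀ c d : A, (φ c).R d * y = (φ (m.R c)).R d * x := by
    intro m
    refine indL (fun x => ∃ y : A, ∀ c d : A, (φ c).R d * y = (φ (m.R c)).R d * x)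
      ⟨0, by simp⟩ (fun a b => ⟨(φ (m.L a)).L b, fun c d => key1 m a b c d⟩) ?_ ?_
    · rintro x y ⟨yx, hx⟩ ⟨yy, hy⟩
      refine ⟨yx + yy, fun c d => ?_⟩
      show (φ c).R d * (yx + yy) = (φ (m.R c)).R d * (x + y)
      rw [mul_add, hx, hy, mul_add]
    · rintro x ⟨yx, hx⟩
      refine ⟨-yx, fun c d => ?_⟩
      show (φ c).R d * -yx = (φ (m.R c)).R d * -x
      rw [mul_neg, hx, mul_neg]
  have exR : ∀ (m : Mult A) (x : A), ∃ z : A,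
      ∀ c d : A, z * (φ c).L d = x * (φ (m.L c)).L d := by
    intro m
    refine indR (fun x => ∃ z : A, ∀ c d : A, z * (φ c).L d = x * (φ (m.L c)).L d)
      ⟨0, by simp⟩ (fun a b => ⟨(φ (m.R a)).R b, fun c d => key2 m a b c d⟩) ?_ ?_
    · rintro x y ⟨zx, hx⟩ ⟨zy, hy⟩
      refine ⟨zx + zy, fun c d => ?_⟩
      show (zx + zy) * (φ c).L d = (x + y) * (φ (m.L c)).L d
      rw [add_mul, hx, hy, add_mul]
    · rintro x ⟨zx, hx⟩
      refine ⟨-zx, fun c d => ?_⟩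
      show -zx * (φ c).L d = -x * (φ (m.L c)).L d
      rw [neg_mul, hx, neg_mul]
  choose Lf hLf using exL
  choose Rf hRf using exR
  have Lf_unique : ∀ (m : Mult A) (x y : A),
      (∀ c d : A, (φ c).R d * y = (φ (m.R c)).R d * x) → Lf m x = y := fun m x y h =>
    extL _ _ fun c d => (hLf m x c d).trans (h c d).symm
  have Rf_unique : ∀ (m : Mult A) (x z : A),
      (∀ c d : A, z * (φ c).L d = x * (φ (m.L c)).L d) → Rf m x = z := fun m x z h =>
    extR _ _ fun c d => (hRf m x c d).trans (h c d).symm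
  have Lf_gen : ∀ (m : Mult A) (a b : A), Lf m ((φ a).L b) = (φ (m.L a)).L b := fun m a b =>
    Lf_unique m _ _ fun c d => key1 m a b c d
  have Rf_gen : ∀ (m : Mult A) (a b : A), Rf m ((φ a).R b) = (φ (m.R a)).R b := fun m a b =>
    Rf_unique m _ _ fun c d => key2 m a b c d
  have Rf_zero : ∀ m : Mult A, Rf m 0 = 0 := fun m =>
    Rf_unique m 0 0 fun c d => by simp
  have Rf_add : ∀ (m : Mult A) (x y : A), Rf m (x + y) = Rf m x + Rf m y := fun m x y =>
    Rf_unique m _ _ fun c d => by rw [add_mul, hRf, hRf, add_mul]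
  have Rf_neg : ∀ (m : Mult A) (x : A), Rf m (-x) = -Rf m x := fun m x =>
    Rf_unique m _ _ fun c d => by rw [neg_mul, hRf, neg_mul]
  -- the three Mult axioms for (Lf m, Rf m)
  have mid' : ∀ (m : Mult A) (a b : A), a * Lf m b = Rf m a * b := by
    intro m a b
    refine indR (fun a => a * Lf m b = Rf m a * b) (by show (0:A) * Lf m b = Rf m 0 * b; rw [zero_mul, Rf_zero, zero_mul])
      (fun c d => by show (φ c).R d * Lf m b = Rf m ((φ c).R d) * b; rw [hLf m b c d, Rf_gen]) ?_ ?_ a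
    · intro x y hx hy
      show (x + y) * Lf m b = Rf m (x + y) * b
      rw [add_mul, hx, hy, Rf_add, add_mul]
    · intro x hx
      show -x * Lf m b = Rf m (-x) * b
      rw [neg_mul, hx, Rf_neg, neg_mul]
  have lmul' : ∀ (m : Mult A) (a b : A), Lf m (a * b) = Lf m a * b := by
    intro m a b
    refine extL _ _ fun c d => ?_
    rw [hLf m (a * b) c d, ← mul_assoc, ← mul_assoc, hLf m a c d]
  have rmul' : ∀ (m : Mult A) (a b : A), Rf m (a * b) = a * Rf m b := by
    intro m a b
    refine extR _ _ fun c d => ?_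
    rw [hRf m (a * b) c d, mul_assoc a b, ← hRf m b c d, ← mul_assoc]
  -- the candidate map
  set F : Mult A → Mult A := fun m => ⟨Lf m, Rf m, mid' m, lmul' m, rmul' m⟩ with hF
  have F_zero : F 0 = 0 := by
    refine Mult.ext' (funext fun x => ?_) (funext fun x => ?_)
    · show Lf 0 x = 0
      refine Lf_unique 0 x 0 fun c d => ?_
      show (φ c).R d * 0 = (φ (0 : A)).R d * x
      rw [map_zero φ]
      show (φ c).R d * 0 = 0 * x
      rw [mul_zero, zero_mul]
    · show Rf 0 x = 0
      refine Rf_unique 0 x 0 fun c d => ?_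
      show 0 * (φ c).L d = x * (φ (0 : A)).L d
      rw [map_zero φ]
      show 0 * (φ c).L d = x * 0
      rw [zero_mul, mul_zero]
  have F_add : ∀ m n : Mult A, F (m + n) = F m + F n := by
    intro m n
    refine Mult.ext' (funext fun x => ?_) (funext fun x => ?_)
    · show Lf (m + n) x = Lf m x + Lf n x
      refine Lf_unique (m + n) x _ fun c d => ?_
      show (φ c).R d * (Lf m x + Lf n x) = (φ (m.R c + n.R c)).R d * x
      rw [map_add φ]
      show (φ c).R d * (Lf m x + Lf n x) = ((φ (m.R c)).R d + (φ (n.R c)).R d) * x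
      rw [mul_add, hLf, hLf, add_mul]
    · show Rf (m + n) x = Rf m x + Rf n x
      refine Rf_unique (m + n) x _ fun c d => ?_
      show (Rf m x + Rf n x) * (φ c).L d = x * (φ (m.L c + n.L c)).L d
      rw [map_add φ]
      show (Rf m x + Rf n x) * (φ c).L d = x * ((φ (m.L c)).L d + (φ (n.L c)).L d)
      rw [add_mul, hRf, hRf, mul_add]
  refine ⟨⟨⟨F, F_zero⟩, F_add⟩, ⟨?_, ?_, ?_⟩, ?_⟩
  · -- multiplicativity
    intro m n
    refine Mult.ext' (funext fun x => ?_) (funext fun x => ?_)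
    · show Lf (m * n) x = Lf m (Lf n x)
      refine Lf_unique (m * n) x _ fun c d => ?_
      show (φ c).R d * Lf m (Lf n x) = (φ (n.R (m.R c))).R d * x
      rw [hLf m (Lf n x) c d, hLf n x (m.R c) d]
    · show Rf (m * n) x = Rf n (Rf m x)
      refine Rf_unique (m * n) x _ fun c d => ?_
      show Rf n (Rf m x) * (φ c).L d = x * (φ (m.L (n.L c))).L d
      rw [hRf n (Rf m x) c d, hRf m x (n.L c) d]
  · -- unitality
    refine Mult.ext' (funext fun x => ?_) (funext fun x => ?_)
    · show Lf 1 x = x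
      exact Lf_unique 1 x x fun c d => rfl
    · show Rf 1 x = x
      exact Rf_unique 1 x x fun c d => rfl
  · -- extension property
    intro a
    refine Mult.ext' (funext fun x => ?_) (funext fun x => ?_)
    · show Lf (Mult.incl a) x = (φ a).L x
      refine Lf_unique _ x _ fun c d => ?_
      show (φ c).R d * (φ a).L x = (φ (c * a)).R d * x
      calc (φ c).R d * (φ a).L x
          = (φ a).R ((φ c).R d) * x := (φ a).mid _ _
        _ = ((φ c) * (φ a)).R d * x := rfl
        _ = (φ (c * a)).R d * x := by rw [hφmul]
    · show Rf (Mult.incl a) x = (φ a).R x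
      refine Rf_unique _ x _ fun c d => ?_
      show (φ a).R x * (φ c).L d = x * (φ (a * c)).L d
      calc (φ a).R x * (φ c).L d
          = (φ c).R ((φ a).R x) * d := (φ c).mid _ _
        _ = ((φ a) * (φ c)).R x * d := rfl
        _ = (φ (a * c)).R x * d := by rw [hφmul]
        _ = x * (φ (a * c)).L d := ((φ (a * c)).mid _ _).symm
  · -- uniqueness
    rintro ψ' ⟨hmul, -, hincl⟩
    have mul_incl : ∀ (m : Mult A) (a : A), m * Mult.incl a = Mult.incl (m.L a) := by
      intro m a
      refine Mult.ext' (funext fun b => ?_) (funext fun b => ?_)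
      · show m.L (a * b) = m.L a * b
        exact m.lmul a b
      · show m.R b * a = b * m.L a
        exact (m.mid b a).symm
    have incl_mul : ∀ (m : Mult A) (a : A), Mult.incl a * m = Mult.incl (m.R a) := by
      intro m a
      refine Mult.ext' (funext fun b => ?_) (funext fun b => ?_)
      · show a * m.L b = m.R a * b
        exact m.mid a b
      · show m.R (b * a) = b * m.R a
        exact m.rmul b a
    refine AddMonoidHom.ext fun m => ?_
    have hL' : ∀ a : A, ψ' m * φ a = φ (m.L a) := fun a => by
      rw [← hincl a, ← hmul, mul_incl, hincl]
    have hR' : ∀ a : A, φ a * ψ' m = φ (m.R a) := fun a => by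
      rw [← hincl a, ← hmul, incl_mul, hincl]
    refine Mult.ext' (funext fun x => ?_) (funext fun x => ?_)
    · show (ψ' m).L x = Lf m x
      refine indL (fun x => (ψ' m).L x = Lf m x) ?_ ?_ ?_ ?_ x
      · show (ψ' m).L 0 = Lf m 0
        rw [L_zero (ψ' m)]
        exact (Lf_unique m 0 0 fun c d => by simp).symm
      · intro c d
        show (ψ' m).L ((φ c).L d) = Lf m ((φ c).L d)
        have h1 : (ψ' m).L ((φ c).L d) = (ψ' m * φ c).L d := rfl
        rw [h1, hL' c, Lf_gen]
      · intro x y hx hy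
        show (ψ' m).L (x + y) = Lf m (x + y)
        rw [L_add (ψ' m), hx, hy]
        exact (Lf_unique m (x + y) _ fun c d => by
          rw [mul_add, hLf, hLf, mul_add]).symm
      · intro x hx
        show (ψ' m).L (-x) = Lf m (-x)
        rw [L_neg (ψ' m), hx]
        exact (Lf_unique m (-x) _ fun c d => by rw [mul_neg, hLf, mul_neg]).symm
    · show (ψ' m).R x = Rf m x
      refine indR (fun x => (ψ' m).R x = Rf m x) ?_ ?_ ?_ ?_ x
      · show (ψ' m).R 0 = Rf m 0
        rw [R_zero (ψ' m), Rf_zero]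
      · intro c d
        show (ψ' m).R ((φ c).R d) = Rf m ((φ c).R d)
        have h1 : (ψ' m).R ((φ c).R d) = (φ c * ψ' m).R d := rfl
        rw [h1, hR' c, Rf_gen]
      · intro x y hx hy
        show (ψ' m).R (x + y) = Rf m (x + y)
        rw [R_add (ψ' m), hx, hy, Rf_add]
      · intro x hx
        show (ψ' m).R (-x) = Rf m (-x)
        rw [R_neg (ψ' m), hx, Rf_neg]
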